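/- Let D ⊆ ℝ³ be a connected open set and u : D → ℝ³ a C¹ vector field with Du = (∇u + (∇u)ᵀ)/2 = 0 on D. Then there exist η, ω ∈ ℝ³ such that u(x) = η + ω × x for all x ∈ D. -/

import Mathlib

open Matrix

private lemma clm_apply_eq_sum (L : (Fin 3 → ℝ) →L[ℝ] (Fin 3 → ℝ)) (v : Fin 3 → ℝ) (i : Fin 3) :
    L v i = ∑ j : Fin 3, v j * L (Pi.single j 1) i := by
  have hv : v = ∑ j : Fin 3, v j • (Pi.single j 1 : Fin 3 → ℝ) := by
    funext k
    simp [Pi.single_apply, Finset.sum_apply]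
  conv_lhs => rw [hv]
  rw [map_sum]
  simp [Finset.sum_apply, smul_eq_mul]

private lemma key_asym (L : (Fin 3 → ℝ) →L[ℝ] (Fin 3 → ℝ))
    (h : ∀ i j : Fin 3, L (Pi.single j 1) i + L (Pi.single i 1) j = 0)
    (v w : Fin 3 → ℝ) :
    ∑ i, L v i * w i + ∑ i, L w i * v i = 0 := by
  have e1 : ∀ z y : Fin 3 → ℝ, ∑ i, L z i * y i = ∑ i, ∑ j, z j * L (Pi.single j 1) i * y i :=
    fun z y => Finset.sum_congr rfl fun i _ => by rw [clm_apply_eq_sum, Finset.sum_mul]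
  rw [e1 v w, e1 w v]
  rw [Finset.sum_comm (f := fun i j => w j * L (Pi.single j 1) i * v i)]
  rw [← Finset.sum_add_distrib]
  refine Finset.sum_eq_zero fun i _ => ?_
  rw [← Finset.sum_add_distrib]
  refine Finset.sum_eq_zero fun j _ => ?_
  linear_combination (v j * w i) * h i j

private lemma local_struct (D : Set (Fin 3 → ℝ)) (u : (Fin 3 → ℝ) → (Fin 3 → ℝ))
    (hdiff : ∀ x ∈ D, DifferentiableAt ℝ u x)
    (hkey : ∀ x ∈ D, ∀ v w : Fin 3 → ℝ,
      ∑ i, fderiv ℝ u x v i * w i + ∑ i, fderiv ℝ u x w i * v i = 0)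
    {c : Fin 3 → ℝ} {r : ℝ} (hr : 0 < r) (hball : Metric.ball c r ⊆ D) :
    ∀ y ∈ Metric.ball c r,
      fderiv ℝ u y = fderiv ℝ u c ∧ u y = u c + fderiv ℝ u c (y - c) := by
  -- Step 1
  have step1 : ∀ x ∈ Metric.ball c r, ∀ y ∈ Metric.ball c r,
      ∑ i, (u y i - u x i) * (y i - x i) = 0 := by
    intro x hx y hy
    set p : ℝ → (Fin 3 → ℝ) := fun t => x + t • (y - x) with hp
    have hpmem : ∀ t ∈ Set.Icc (0:ℝ) 1, p t ∈ Metric.ball c r := fun t ht =>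
      (convex_ball c r).add_smul_sub_mem hx hy ht
    set φ : ℝ → ℝ := fun t => ∑ i, u (p t) i * (y i - x i) with hφdef
    have hφ : ∀ t ∈ Set.Icc (0:ℝ) 1,
        HasDerivAt φ (∑ i, fderiv ℝ u (p t) (y - x) i * (y i - x i)) t := by
      intro t ht
      have hpd : HasDerivAt p (y - x) t := by
        have h1 : HasDerivAt (fun s : ℝ => s • (y - x)) ((1:ℝ) • (y - x)) t :=
          (hasDerivAt_id t).smul_const (y - x)
        rw [one_smul] at h1
        exact h1.const_add x
      have hud : HasDerivAt (fun s => u (p s)) (fderiv ℝ u (p t) (y - x)) t :=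
        (hdiff _ (hball (hpmem t ht))).hasFDerivAt.comp_hasDerivAt t hpd
      exact HasDerivAt.fun_sum fun i _ =>
        (((ContinuousLinearMap.proj i : (Fin 3 → ℝ) →L[ℝ] ℝ).hasFDerivAt.comp_hasDerivAt
          t hud)).mul_const (y i - x i)
    have hder0 : ∀ t ∈ Set.Icc (0:ℝ) 1,
        ∑ i, fderiv ℝ u (p t) (y - x) i * (y i - x i) = 0 := by
      intro t ht
      have := hkey _ (hball (hpmem t ht)) (y - x) (y - x)
      have he : ∀ i : Fin 3, (y - x) i = y i - x i := fun i => rfl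
      simp only [he] at this
      linarith
    have hcont : ContinuousOn φ (Set.Icc 0 1) := fun t ht =>
      ((hφ t ht).continuousAt).continuousWithinAt
    have hright : ∀ t ∈ Set.Ico (0:ℝ) 1, HasDerivWithinAt φ 0 (Set.Ici t) t := by
      intro t ht
      have h1 := hφ t (Set.Ico_subset_Icc_self ht)
      rw [hder0 t (Set.Ico_subset_Icc_self ht)] at h1
      exact h1.hasDerivWithinAt
    have h10 : φ 1 = φ 0 :=
      constant_of_has_deriv_right_zero hcont hright 1 (by norm_num)
    have hp1 : p 1 = y := by simp [hp]
    have hp0 : p 0 = x := by simp [hp]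
    rw [hφdef] at h10
    simp only [hp1, hp0] at h10
    simp only [sub_mul, Finset.sum_sub_distrib, sub_eq_zero]
    exact h10
  -- Step 2
  have step2 : ∀ x ∈ Metric.ball c r, ∀ y ∈ Metric.ball c r,
      u y = u x + fderiv ℝ u y (y - x) := by
    intro x hx y hy
    set ψ : (Fin 3 → ℝ) → ℝ := fun z => ∑ i, (u z i - u x i) * (z i - x i) with hψdef
    set L : (Fin 3 → ℝ) →L[ℝ] ℝ :=
      ∑ i, ((u y i - u x i) • (ContinuousLinearMap.proj i : (Fin 3 → ℝ) →L[ℝ] ℝ)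
        + (y i - x i) • ((ContinuousLinearMap.proj i : (Fin 3 → ℝ) →L[ℝ] ℝ).comp
            (fderiv ℝ u y))) with hLdef
    have hL : HasFDerivAt ψ L y := by
      refine HasFDerivAt.fun_sum fun i _ => ?_
      have hc : HasFDerivAt (fun z => u z i - u x i)
          ((ContinuousLinearMap.proj i : (Fin 3 → ℝ) →L[ℝ] ℝ).comp (fderiv ℝ u y)) y :=
        ((ContinuousLinearMap.proj i : (Fin 3 → ℝ) →L[ℝ] ℝ).hasFDerivAt.comp y
          (hdiff _ (hball hy)).hasFDerivAt).sub_const (u x i)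
      have hd : HasFDerivAt (fun z : Fin 3 → ℝ => z i - x i)
          (ContinuousLinearMap.proj i : (Fin 3 → ℝ) →L[ℝ] ℝ) y :=
        (ContinuousLinearMap.proj i : (Fin 3 → ℝ) →L[ℝ] ℝ).hasFDerivAt.sub_const (x i)
      exact hc.mul hd
    have hzero : ψ =ᶠ[nhds y] fun _ => 0 :=
      Filter.eventually_of_mem (Metric.isOpen_ball.mem_nhds hy) fun z hz => step1 x hx z hz
    have hLzero : L = 0 := by
      have h1 : fderiv ℝ ψ y = L := hL.fderiv
      have h2 : fderiv ℝ ψ y = 0 := by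
        rw [hzero.fderiv_eq]; exact fderiv_const_apply 0
      rw [h1] at h2; exact h2
    have happ : ∀ v : Fin 3 → ℝ,
        (∑ i, ((u y i - u x i) * v i + (y i - x i) * fderiv ℝ u y v i)) = 0 := by
      intro v
      have := congrFun (congrArg (DFunLike.coe) hLzero) v
      simpa [hLdef, ContinuousLinearMap.sum_apply, mul_comm] using this
    have hcomb : ∀ k : Fin 3, u y k - u x k = fderiv ℝ u y (y - x) k := by
      intro k
      have h1 := happ (Pi.single k 1)
      have h2 := hkey y (hball hy) (Pi.single k 1) (y - x)
      have he : ∀ i : Fin 3, (y - x) i = y i - x i := fun i => rfl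
      simp only [he] at h2
      simp only [Pi.single_apply, mul_ite, mul_one, mul_zero, ite_mul, one_mul, zero_mul,
        Finset.sum_add_distrib, Finset.sum_ite_eq', Finset.mem_univ, if_true,
        mul_comm] at h1 h2
      linarith
    funext k
    have := hcomb k
    simp only [Pi.add_apply]
    linarith
  -- Step 3
  have step3 : ∀ y ∈ Metric.ball c r, ∀ x ∈ Metric.ball c r,
      fderiv ℝ u x = fderiv ℝ u y := by
    intro y hy x hx
    set g : (Fin 3 → ℝ) → (Fin 3 → ℝ) := fun z => u y + fderiv ℝ u y (z - y) with hgdef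
    have hgu : ∀ z ∈ Metric.ball c r, u z = g z := by
      intro z hz
      have h1 := step2 z hz y hy
      have : fderiv ℝ u y (z - y) = -(fderiv ℝ u y (y - z)) := by
        rw [← map_neg]; congr 1; abel
      rw [hgdef]
      simp only [this]
      rw [h1]; abel
    have hg : HasFDerivAt g (fderiv ℝ u y) x := by
      have h1 : HasFDerivAt (fun z : Fin 3 → ℝ => fderiv ℝ u y (z - y))
          (fderiv ℝ u y) x := by
        have h2 : HasFDerivAt (fun z : Fin 3 → ℝ => z - y)
            (ContinuousLinearMap.id ℝ (Fin 3 → ℝ)) x := (hasFDerivAt_id x).sub_const y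
        have h3 := (fderiv ℝ u y).hasFDerivAt.comp x h2
        simpa using h3
      exact h1.const_add (u y)
    have heq : u =ᶠ[nhds x] g :=
      Filter.eventually_of_mem (Metric.isOpen_ball.mem_nhds hx) hgu
    rw [heq.fderiv_eq, hg.fderiv]
  intro y hy
  have hc : c ∈ Metric.ball c r := Metric.mem_ball_self hr
  have hf := step3 c hc y hy
  refine ⟨hf, ?_⟩
  rw [← hf]
  exact step2 c hc y hy

/-- Killing fields of `ℝ³`: if `u` is a `C¹` vector field on a connected open set
`D ⊆ ℝ³` whose symmetric gradient `Du = (∇u + (∇u)ᵀ)/2` vanishes on `D`, then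
`u(x) = η + ω × x` on `D` for some `η, ω ∈ ℝ³`. -/
theorem rigid_motion_of_symmetric_gradient_eq_zero (D : Set (Fin 3 → ℝ))
    (hDopen : IsOpen D) (hDconn : IsConnected D)
    (u : (Fin 3 → ℝ) → (Fin 3 → ℝ)) (hu : ContDiffOn ℝ 1 u D)
    (hsym : ∀ x ∈ D, ∀ i j : Fin 3,
      fderiv ℝ (fun y => u y i) x (Pi.single j 1) +
        fderiv ℝ (fun y => u y j) x (Pi.single i 1) = 0) :
    ∃ η ω : Fin 3 → ℝ, ∀ x ∈ D, u x = η + crossProduct ω x := by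
  have hdiff : ∀ x ∈ D, DifferentiableAt ℝ u x := fun x hx =>
    (hu.differentiableOn one_ne_zero).differentiableAt (hDopen.mem_nhds hx)
  have hcomp : ∀ x ∈ D, ∀ i : Fin 3, fderiv ℝ (fun y => u y i) x
      = (ContinuousLinearMap.proj i : (Fin 3 → ℝ) →L[ℝ] ℝ).comp (fderiv ℝ u x) := by
    intro x hx i
    have h : HasFDerivAt (fun y => u y i)
        ((ContinuousLinearMap.proj i : (Fin 3 → ℝ) →L[ℝ] ℝ).comp (fderiv ℝ u x)) x :=
      (ContinuousLinearMap.proj i : (Fin 3 → ℝ) →L[ℝ] ℝ).hasFDerivAt.comp x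
        (hdiff x hx).hasFDerivAt
    exact h.fderiv
  have ha : ∀ x ∈ D, ∀ i j : Fin 3,
      fderiv ℝ u x (Pi.single j 1) i + fderiv ℝ u x (Pi.single i 1) j = 0 := by
    intro x hx i j
    have h := hsym x hx i j
    rw [hcomp x hx i, hcomp x hx j] at h
    simpa using h
  have hkey : ∀ x ∈ D, ∀ v w : Fin 3 → ℝ,
      ∑ i, fderiv ℝ u x v i * w i + ∑ i, fderiv ℝ u x w i * v i = 0 := fun x hx =>
    key_asym (fderiv ℝ u x) (ha x hx)
  obtain ⟨x₀, hx₀⟩ := hDconn.nonempty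
  set A := fderiv ℝ u x₀ with hA
  set S := {x | x ∈ D ∧ fderiv ℝ u x = A ∧ u x = u x₀ + A (x - x₀)} with hSdef
  have hx₀S : x₀ ∈ S := ⟨hx₀, rfl, by simp⟩
  have hSopen : IsOpen S := by
    rw [Metric.isOpen_iff]
    intro x hx
    obtain ⟨r, hr, hball⟩ := Metric.isOpen_iff.1 hDopen x hx.1
    refine ⟨r, hr, fun y hy => ?_⟩
    obtain ⟨hdf, huf⟩ := local_struct D u hdiff hkey hr hball y hy
    refine ⟨hball hy, hdf.trans hx.2.1, ?_⟩
    rw [huf, hx.2.1, hx.2.2, map_sub, map_sub, map_sub]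
    abel
  have hTopen : IsOpen {x | x ∈ D ∧ x ∉ S} := by
    rw [Metric.isOpen_iff]
    intro x hx
    obtain ⟨r, hr, hball⟩ := Metric.isOpen_iff.1 hDopen x hx.1
    refine ⟨r, hr, fun y hy => ⟨hball hy, fun hyS => hx.2 ?_⟩⟩
    obtain ⟨hdf, huf⟩ := local_struct D u hdiff hkey hr hball y hy
    have hxc : x ∈ Metric.ball x r := Metric.mem_ball_self hr
    have hdA : fderiv ℝ u x = A := by rw [← hdf]; exact hyS.2.1
    refine ⟨hx.1, hdA, ?_⟩
    have h1 : u y = u x + A (y - x) := by rw [huf, hdA]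
    have h2 := hyS.2.2
    rw [h1] at h2
    have h3 : A (y - x₀) = A (y - x) + A (x - x₀) := by
      rw [← map_add]; congr 1; abel
    rw [h3] at h2
    have h5 : u x + A (y - x) = (u x₀ + A (x - x₀)) + A (y - x) := by
      rw [h2]; abel
    exact add_right_cancel h5
  have hSD : ∀ x ∈ D, x ∈ S := by
    by_contra hcon
    push_neg at hcon
    obtain ⟨z, hzD, hzS⟩ := hcon
    have hsub : D ⊆ S ∪ {x | x ∈ D ∧ x ∉ S} := by
      intro x hx
      by_cases h : x ∈ S
      · exact Or.inl h
      · exact Or.inr ⟨hx, h⟩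
    obtain ⟨w, -, hwS, -, hwnS⟩ := hDconn.isPreconnected S {x | x ∈ D ∧ x ∉ S}
      hSopen hTopen hsub ⟨x₀, hx₀, hx₀S⟩ ⟨z, hzD, hzD, hzS⟩
    exact hwnS hwS
  set ω : Fin 3 → ℝ :=
    ![A (Pi.single 1 1) 2, A (Pi.single 2 1) 0, A (Pi.single 0 1) 1] with hω
  have hasym := ha x₀ hx₀
  have hcross : ∀ z : Fin 3 → ℝ, A z = crossProduct ω z := by
    intro z
    have e00 := hasym 0 0; have e01 := hasym 0 1; have e02 := hasym 0 2
    have e11 := hasym 1 1; have e12 := hasym 1 2; have e22 := hasym 2 2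
    simp only [← hA] at e00 e01 e02 e11 e12 e22
    funext i
    fin_cases i
    · show A z 0 = (crossProduct ω) z 0
      rw [clm_apply_eq_sum A z 0, Fin.sum_univ_three, cross_apply]
      simp only [hω, Matrix.cons_val_zero, Matrix.cons_val_one, Matrix.head_cons,
        Matrix.cons_val_two, Matrix.tail_cons]
      linear_combination (z 0 / 2) * e00 + z 1 * e01
    · show A z 1 = (crossProduct ω) z 1
      rw [clm_apply_eq_sum A z 1, Fin.sum_univ_three, cross_apply]
      simp only [hω, Matrix.cons_val_zero, Matrix.cons_val_one, Matrix.head_cons,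
        Matrix.cons_val_two, Matrix.tail_cons]
      linear_combination (z 1 / 2) * e11 + z 2 * e12
    · show A z 2 = (crossProduct ω) z 2
      rw [clm_apply_eq_sum A z 2, Fin.sum_univ_three, cross_apply]
      simp only [hω, Matrix.cons_val_zero, Matrix.cons_val_one, Matrix.head_cons,
        Matrix.cons_val_two, Matrix.tail_cons]
      linear_combination z 0 * e02 + (z 2 / 2) * e22
  refine ⟨u x₀ - A x₀, ω, fun x hx => ?_⟩
  obtain ⟨-, -, hux⟩ := hSD x hx
  rw [hux, map_sub, ← hcross x]
  abel
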